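/- Let B(u,v) = diag(e^u) K diag(e^v) with K ∈ ℝ₊^{n×n}, K_{ij} = exp(−C_{ij}/γ), and let u_k, v_k be iterates of Sinkhorn's algorithm started from u_0 = v_0 = 0, where at even steps u is updated by u_{k+1} = u_k + ln r − ln(B(u_k,v_k)1ₙ) (and v fixed), and symmetrically at odd steps. Suppose B(u_k,v_k)1ₙ = r (i.e., k−1 was an even update step), where r ∈ Δₙ is a probability vector. Then max_i u_{k,i} − min_i u_{k,i} ≤ R, where R := −ln(K_min · min_{i,j}{r_i, c_j}) and K_min := min_{i,j} K_{ij} = e^{−‖C‖∞/γ}. -/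

import Mathlib

theorem stmt_7 (n : ℕ) [NeZero n] (C : Fin n → Fin n → ℝ) (hC : ∀ i j, 0 ≤ C i j)
    (γ : ℝ) (hγ : 0 < γ)
    (r c : Fin n → ℝ) (hr : ∀ i, 0 < r i) (hc : ∀ j, 0 < c j)
    (hr1 : ∑ i, r i = 1) (hc1 : ∑ j, c j = 1)
    (K : Fin n → Fin n → ℝ) (hK : ∀ i j, K i j = Real.exp (-(C i j) / γ))
    (u v : Fin n → ℝ)
    (hmarg : ∀ i, ∑ j, Real.exp (u i) * K i j * Real.exp (v j) = r i)
    (Kmin R : ℝ)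
    (hKmin : Kmin = Finset.univ.inf' Finset.univ_nonempty fun i =>
      Finset.univ.inf' Finset.univ_nonempty fun j => K i j)
    (hR : R = -Real.log (Kmin *
      min (Finset.univ.inf' Finset.univ_nonempty r)
        (Finset.univ.inf' Finset.univ_nonempty c))) :
    Finset.univ.sup' Finset.univ_nonempty u -
      Finset.univ.inf' Finset.univ_nonempty u ≤ R := by
  classical
  set T : ℝ := ∑ j, Real.exp (v j) with hT
  have hTpos : 0 < T := Finset.sum_pos (fun j _ => Real.exp_pos _) Finset.univ_nonempty
  have hKpos : ∀ i j, 0 < K i j := fun i j => by rw [hK]; exact Real.exp_pos _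
  have hKle1 : ∀ i j, K i j ≤ 1 := fun i j => by
    rw [hK]
    exact Real.exp_le_one_iff.mpr
      (div_nonpos_of_nonpos_of_nonneg (neg_nonpos_of_nonneg (hC i j)) hγ.le)
  have hKminpos : 0 < Kmin := by
    rw [hKmin]
    exact (Finset.lt_inf'_iff _).mpr fun i _ =>
      (Finset.lt_inf'_iff _).mpr fun j _ => hKpos i j
  have hKminle : ∀ i j, Kmin ≤ K i j := fun i j => by
    rw [hKmin]
    exact le_trans (Finset.inf'_le _ (Finset.mem_univ i))
      (Finset.inf'_le _ (Finset.mem_univ j))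
  set S : Fin n → ℝ := fun i => ∑ j, K i j * Real.exp (v j) with hS
  have hSlow : ∀ i, Kmin * T ≤ S i := by
    intro i
    rw [hT, Finset.mul_sum]
    exact Finset.sum_le_sum fun j _ =>
      mul_le_mul_of_nonneg_right (hKminle i j) (Real.exp_pos _).le
  have hShigh : ∀ i, S i ≤ T := by
    intro i
    refine Finset.sum_le_sum fun j _ => ?_
    nth_rewrite 2 [← one_mul (Real.exp (v j))]
    exact mul_le_mul_of_nonneg_right (hKle1 i j) (Real.exp_pos _).le
  have hSpos : ∀ i, 0 < S i := fun i => lt_of_lt_of_le (by positivity) (hSlow i)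
  have heq : ∀ i, Real.exp (u i) * S i = r i := by
    intro i
    rw [← hmarg i, hS, Finset.mul_sum]
    exact Finset.sum_congr rfl fun j _ => (mul_assoc _ _ _).symm
  have hrle1 : ∀ i, r i ≤ 1 := by
    intro i
    rw [← hr1]
    exact Finset.single_le_sum (fun j _ => (hr j).le) (Finset.mem_univ i)
  obtain ⟨i0, _, h0⟩ := Finset.exists_mem_eq_sup' Finset.univ_nonempty u
  obtain ⟨i1, _, h1⟩ := Finset.exists_mem_eq_inf' Finset.univ_nonempty u
  set rmin : ℝ := Finset.univ.inf' Finset.univ_nonempty r with hrmin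
  have hrminpos : 0 < rmin :=
    (Finset.lt_inf'_iff _).mpr fun i _ => hr i
  have hrminle : rmin ≤ r i1 := Finset.inf'_le _ (Finset.mem_univ i1)
  have hexp0 : Real.exp (u i0) ≤ 1 / (Kmin * T) := by
    have h : Real.exp (u i0) = r i0 / S i0 := by
      field_simp [← heq i0, (hSpos i0).ne']
      exact heq i0
    rw [h]
    exact div_le_div₀ (by norm_num) (hrle1 i0) (by positivity) (hSlow i0)
  have hexp1 : rmin / T ≤ Real.exp (u i1) := by
    have h : Real.exp (u i1) = r i1 / S i1 := by
      field_simp [← heq i1, (hSpos i1).ne']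
      exact heq i1
    rw [h]
    exact div_le_div₀ (hr i1).le hrminle (hSpos i1) (hShigh i1)
  have hmain : Real.exp (u i0 - u i1) ≤ 1 / (Kmin * rmin) := by
    rw [Real.exp_sub]
    calc Real.exp (u i0) / Real.exp (u i1)
        ≤ (1 / (Kmin * T)) / (rmin / T) :=
          div_le_div₀ (by positivity) hexp0 (by positivity) hexp1
      _ = 1 / (Kmin * rmin) := by field_simp
  have hle : u i0 - u i1 ≤ -Real.log (Kmin * rmin) := by
    have := Real.log_le_log (Real.exp_pos _) hmain
    rwa [Real.log_exp, one_div, Real.log_inv] at this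
  refine le_trans (by rw [h0, h1]) (le_trans hle ?_)
  rw [hR]
  have hcminpos : (0:ℝ) < Finset.univ.inf' Finset.univ_nonempty c :=
    (Finset.lt_inf'_iff _).mpr fun j _ => hc j
  have hmpos : 0 < min rmin (Finset.univ.inf' Finset.univ_nonempty c) :=
    lt_min hrminpos hcminpos
  have : Kmin * min rmin (Finset.univ.inf' Finset.univ_nonempty c) ≤ Kmin * rmin :=
    mul_le_mul_of_nonneg_left (min_le_left _ _) hKminpos.le
  exact neg_le_neg (Real.log_le_log (by positivity) this)
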